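/- Let H ∈ (1/2, 1), α₀ ∈ (H − 1/2, 1], K ≥ 0, T > 0, and let f : [0, T] → ℝ satisfy |f(t) − f(s)| ≤ K·|t − s|^{α₀} for all s, t ∈ [0, T]. Then for every u ∈ (0, T]: the function s ↦ s^{1/2−H}·(f(u) − f(s))·(u−s)^{−(H+1/2)} is Lebesgue integrable on (0, u); the constant B := ∫_0^1 r^{1/2−H}·(1−r)^{α₀−H−1/2} dr is finite; and u^{H−1/2}·|∫_0^u s^{1/2−H}·(f(u) − f(s))·(u−s)^{−(H+1/2)} ds| ≤ K·B·u^{α₀−H+1/2}. -/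

import Mathlib

open MeasureTheory

lemma base_bdd {b : ℝ} {x : ℝ} (h1 : 1/2 ≤ x) (h2 : x ≤ 1) :
    x ^ b ≤ max ((1/2:ℝ) ^ b) 1 := by
  rcases le_or_gt b 0 with hb | hb
  · exact le_max_of_le_left (Real.rpow_le_rpow_of_nonpos (by norm_num) h1 hb)
  · exact le_max_of_le_right (Real.rpow_le_one (by linarith) h2 hb.le)

lemma beta_integrable {a b : ℝ} (ha : -1 < a) (hb : -1 < b) :
    IntegrableOn (fun s : ℝ => s ^ a * (1 - s) ^ b) (Set.Ioo 0 1) := by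
  have hsub : Set.Ioo (0:ℝ) 1 ⊆ Set.Ioc 0 (1/2) ∪ Set.Ioo (1/2) 1 := by
    intro x hx
    rcases le_or_gt x (1/2) with h | h
    · exact Or.inl ⟨hx.1, h⟩
    · exact Or.inr ⟨h, hx.2⟩
  have hmeas1 : AEStronglyMeasurable (fun s : ℝ => (1 - s) ^ b)
      (volume.restrict (Set.Ioc (0:ℝ) (1/2))) := by
    refine ContinuousOn.aestronglyMeasurable ?_ measurableSet_Ioc
    exact (continuousOn_const.sub continuousOn_id).rpow_const
      (fun x hx => Or.inl (by simp only [Pi.sub_apply, id]; linarith [hx.2]))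
  have hmeas2 : AEStronglyMeasurable (fun s : ℝ => s ^ a)
      (volume.restrict (Set.Ioo (1/2:ℝ) 1)) := by
    refine ContinuousOn.aestronglyMeasurable ?_ measurableSet_Ioo
    exact continuousOn_id.rpow_const (fun x hx => Or.inl (by simp only [id]; linarith [hx.1]))
  have h1 : IntegrableOn (fun s : ℝ => s ^ a * (1 - s) ^ b) (Set.Ioc 0 (1/2)) := by
    have hg : IntegrableOn (fun s : ℝ => s ^ a) (Set.Ioc 0 (1/2)) :=
      (intervalIntegrable_iff_integrableOn_Ioc_of_le (by norm_num)).mp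
        (intervalIntegral.intervalIntegrable_rpow' ha)
    have h2 : IntegrableOn (fun s : ℝ => (1 - s) ^ b * s ^ a) (Set.Ioc 0 (1/2)) := by
      refine hg.bdd_mul (c := max ((1/2:ℝ) ^ b) 1) hmeas1 ?_
      filter_upwards [ae_restrict_mem measurableSet_Ioc] with x hx
      rw [Real.norm_eq_abs, abs_of_nonneg (Real.rpow_nonneg (by linarith [hx.2]) _)]
      exact base_bdd (by linarith [hx.2]) (by linarith [hx.1])
    exact h2.congr_fun (fun x _ => mul_comm _ _) measurableSet_Ioc
  have h2 : IntegrableOn (fun s : ℝ => s ^ a * (1 - s) ^ b) (Set.Ioo (1/2) 1) := by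
    have hg0 : IntervalIntegrable (fun x : ℝ => x ^ b) volume 0 (1/2) :=
      intervalIntegral.intervalIntegrable_rpow' hb
    have hg1 : IntervalIntegrable (fun s : ℝ => (1 - s) ^ b) volume (1/2) 1 := by
      have := (hg0.comp_sub_left 1).symm
      norm_num at this ⊢
      exact this
    have hg : IntegrableOn (fun s : ℝ => (1 - s) ^ b) (Set.Ioo (1/2) 1) :=
      ((integrableOn_Ioc_iff_integrableOn_Ioo).mp
        ((intervalIntegrable_iff_integrableOn_Ioc_of_le (by norm_num)).mp hg1))
    refine hg.bdd_mul (c := max ((1/2:ℝ) ^ a) 1) hmeas2 ?_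
    filter_upwards [ae_restrict_mem measurableSet_Ioo] with x hx
    rw [Real.norm_eq_abs, abs_of_nonneg (Real.rpow_nonneg (by linarith [hx.1]) _)]
    exact base_bdd hx.1.le hx.2.le
  exact ((h1.union h2).mono_set hsub)

lemma beta_scaled {a b u : ℝ} (ha : -1 < a) (hb : -1 < b) (hu : 0 < u) :
    IntegrableOn (fun s : ℝ => s ^ a * (u - s) ^ b) (Set.Ioo 0 u) ∧
    ∫ s in Set.Ioo (0:ℝ) u, s ^ a * (u - s) ^ b
      = u ^ (a + b + 1) * ∫ r in Set.Ioo (0:ℝ) 1, r ^ a * (1 - r) ^ b := by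
  set g : ℝ → ℝ := fun r => r ^ a * (1 - r) ^ b with hgdef
  have hgInt : IntegrableOn g (Set.Ioo 0 1) := beta_integrable ha hb
  have hgII : IntervalIntegrable g volume 0 1 :=
    (intervalIntegrable_iff_integrableOn_Ioc_of_le (by norm_num)).mpr
      ((integrableOn_Ioc_iff_integrableOn_Ioo).mpr hgInt)
  have hpt : ∀ s ∈ Set.Icc (0:ℝ) u, s ^ a * (u - s) ^ b = u ^ (a + b) * g (u⁻¹ * s) := by
    intro s hs
    have hs0 : (0:ℝ) ≤ s := hs.1
    have hr0 : (0:ℝ) ≤ u⁻¹ * s := mul_nonneg (by positivity) hs0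
    have hr1 : u⁻¹ * s ≤ 1 := by
      rw [inv_mul_le_iff₀ hu]; simpa using hs.2
    show s ^ a * (u - s) ^ b = u ^ (a + b) * ((u⁻¹ * s) ^ a * (1 - u⁻¹ * s) ^ b)
    set r := u⁻¹ * s with hrdef
    have h1 : s = u * r := by rw [hrdef]; field_simp
    have h2 : u - s = u * (1 - r) := by rw [hrdef]; field_simp
    rw [h1, show u - u * r = u * (1 - r) from by ring, Real.mul_rpow hu.le hr0, Real.mul_rpow hu.le (by linarith), Real.rpow_add hu]
    ring
  have hII2 : IntervalIntegrable (fun s : ℝ => u ^ (a + b) * g (u⁻¹ * s)) volume 0 u := by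
    have := (hgII.comp_mul_left (c := u⁻¹)).const_mul (u ^ (a + b))
    simpa [div_eq_mul_inv, inv_inv] using this
  have hint : IntegrableOn (fun s : ℝ => s ^ a * (u - s) ^ b) (Set.Ioo 0 u) := by
    have h0 : IntegrableOn (fun s : ℝ => u ^ (a + b) * g (u⁻¹ * s)) (Set.Ioo 0 u) :=
      (integrableOn_Ioc_iff_integrableOn_Ioo).mp
        ((intervalIntegrable_iff_integrableOn_Ioc_of_le hu.le).mp hII2)
    exact h0.congr_fun
      (fun s hs => (hpt s ⟨hs.1.le, hs.2.le⟩).symm) measurableSet_Ioo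
  refine ⟨hint, ?_⟩
  have e1 : ∫ s in Set.Ioo (0:ℝ) u, s ^ a * (u - s) ^ b
      = ∫ s in (0:ℝ)..u, s ^ a * (u - s) ^ b := by
    rw [intervalIntegral.integral_of_le hu.le, integral_Ioc_eq_integral_Ioo]
  have e2 : ∫ r in Set.Ioo (0:ℝ) 1, g r = ∫ r in (0:ℝ)..1, g r := by
    rw [intervalIntegral.integral_of_le (by norm_num), integral_Ioc_eq_integral_Ioo]
  rw [e1, e2]
  rw [intervalIntegral.integral_congr (g := fun s => u ^ (a + b) * g (u⁻¹ * s))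
    (by intro s hs; exact hpt s (by rwa [Set.uIcc_of_le hu.le] at hs))]
  rw [intervalIntegral.integral_const_mul, intervalIntegral.integral_comp_mul_left g
    (inv_ne_zero hu.ne')]
  simp only [mul_zero, mul_one, inv_inv, smul_eq_mul, inv_mul_cancel₀ hu.ne']
  rw [Real.rpow_add_one hu.ne']
  ring


/-- For a Hölder continuous `f` of order `α₀ ∈ (H - 1/2, 1]` on `[0,T]` and `u ∈ (0,T]`,
the function `s ↦ s^{1/2-H}(f(u)-f(s))(u-s)^{-(H+1/2)}` is integrable on `(0,u)`,
`B := ∫_0^1 r^{1/2-H}(1-r)^{α₀-H-1/2} dr` is finite, and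
`u^{H-1/2}|∫_0^u s^{1/2-H}(f(u)-f(s))(u-s)^{-(H+1/2)} ds| ≤ K·B·u^{α₀-H+1/2}`. -/
theorem stmt_4 (H α₀ K T : ℝ) (hH : H ∈ Set.Ioo (1/2 : ℝ) 1)
    (hα : α₀ ∈ Set.Ioc (H - 1/2) 1) (hK : 0 ≤ K) (hT : 0 < T)
    (f : ℝ → ℝ)
    (hf : ∀ s ∈ Set.Icc (0:ℝ) T, ∀ t ∈ Set.Icc (0:ℝ) T, |f t - f s| ≤ K * |t - s| ^ α₀) :
    ∀ u ∈ Set.Ioc (0:ℝ) T,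
      IntegrableOn
        (fun s : ℝ => s ^ (1/2 - H) * (f u - f s) * (u - s) ^ (-(H + 1/2))) (Set.Ioo 0 u) ∧
      IntegrableOn
        (fun r : ℝ => r ^ (1/2 - H) * (1 - r) ^ (α₀ - H - 1/2)) (Set.Ioo 0 1) ∧
      u ^ (H - 1/2) *
          |∫ s in Set.Ioo (0:ℝ) u, s ^ (1/2 - H) * (f u - f s) * (u - s) ^ (-(H + 1/2))| ≤
        K * (∫ r in Set.Ioo (0:ℝ) 1, r ^ (1/2 - H) * (1 - r) ^ (α₀ - H - 1/2)) *
          u ^ (α₀ - H + 1/2) := by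
  obtain ⟨hH1, hH2⟩ := hH
  obtain ⟨hα1, hα2⟩ := hα
  have hα0 : 0 < α₀ := by linarith
  intro u hu
  obtain ⟨hu0, huT⟩ := hu
  set a : ℝ := 1/2 - H with hadef
  set b : ℝ := α₀ - H - 1/2 with hbdef
  have ha : -1 < a := by rw [hadef]; linarith
  have hb : -1 < b := by rw [hbdef]; linarith
  obtain ⟨hgint, hgeq⟩ := beta_scaled (u := u) ha hb hu0
  set B : ℝ := ∫ r in Set.Ioo (0:ℝ) 1, r ^ a * (1 - r) ^ b with hBdef
  have hB0 : 0 ≤ B := by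
    refine setIntegral_nonneg measurableSet_Ioo (fun r hr => ?_)
    exact mul_nonneg (Real.rpow_nonneg hr.1.le _) (Real.rpow_nonneg (by linarith [hr.2]) _)
  -- continuity of f on [0,T]
  have hCont : ContinuousOn f (Set.Icc 0 T) := by
    have hH' : HolderOnWith K.toNNReal α₀.toNNReal f (Set.Icc 0 T) := by
      intro x hx y hy
      rw [edist_dist, edist_dist, Real.dist_eq, Real.dist_eq]
      calc ENNReal.ofReal |f x - f y|
          ≤ ENNReal.ofReal (K * |x - y| ^ α₀) :=
            ENNReal.ofReal_le_ofReal (hf y hy x hx)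
        _ = (K.toNNReal : ENNReal) * (ENNReal.ofReal |x - y|) ^ α₀ := by
            rw [ENNReal.ofReal_mul hK, ← ENNReal.ofReal_rpow_of_nonneg (abs_nonneg _) hα0.le]
            rfl
        _ = (K.toNNReal : ENNReal) * (ENNReal.ofReal |x - y|) ^ (α₀.toNNReal : ℝ) := by
            rw [Real.coe_toNNReal _ hα0.le]
    exact hH'.continuousOn (by simpa [Real.toNNReal_pos] using hα0)
  set F : ℝ → ℝ := fun s => s ^ a * (f u - f s) * (u - s) ^ (-(H + 1/2)) with hFdef
  -- pointwise bound
  have hbound : ∀ s ∈ Set.Ioo (0:ℝ) u, |F s| ≤ K * (s ^ a * (u - s) ^ b) := by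
    intro s hs
    obtain ⟨hs0, hsu⟩ := hs
    have hus : 0 < u - s := by linarith
    have h1 : |F s| = s ^ a * |f u - f s| * (u - s) ^ (-(H + 1/2)) := by
      rw [hFdef]
      simp only [abs_mul, abs_of_nonneg (Real.rpow_nonneg hs0.le a),
        abs_of_nonneg (Real.rpow_nonneg hus.le _)]
    rw [h1]
    have h2 : |f u - f s| ≤ K * (u - s) ^ α₀ := by
      have := hf s ⟨hs0.le, by linarith⟩ u ⟨hu0.le, huT⟩
      rwa [abs_of_pos hus] at this
    calc s ^ a * |f u - f s| * (u - s) ^ (-(H + 1/2))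
        ≤ s ^ a * (K * (u - s) ^ α₀) * (u - s) ^ (-(H + 1/2)) := by
          have h3 : (0:ℝ) ≤ s ^ a := Real.rpow_nonneg hs0.le a
          have h4 : (0:ℝ) ≤ (u - s) ^ (-(H + 1/2)) := Real.rpow_nonneg hus.le _
          exact mul_le_mul_of_nonneg_right (mul_le_mul_of_nonneg_left h2 h3) h4
      _ = K * (s ^ a * (u - s) ^ b) := by
          rw [mul_assoc, mul_assoc, ← Real.rpow_add hus, hbdef]
          ring_nf
  -- measurability of F
  have hFmeas : AEStronglyMeasurable F (volume.restrict (Set.Ioo 0 u)) := by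
    refine ContinuousOn.aestronglyMeasurable ?_ measurableSet_Ioo
    refine ContinuousOn.mul (ContinuousOn.mul ?_ ?_) ?_
    · exact continuousOn_id.rpow_const (fun x hx => Or.inl (ne_of_gt hx.1))
    · exact continuousOn_const.sub
        (hCont.mono (fun x hx => ⟨hx.1.le, by linarith [hx.2]⟩))
    · exact (continuousOn_const.sub continuousOn_id).rpow_const
        (fun x hx => Or.inl (by simp only [Pi.sub_apply, id]; linarith [hx.2]))
  -- integrability of F
  have hKg : IntegrableOn (fun s : ℝ => K * (s ^ a * (u - s) ^ b)) (Set.Ioo 0 u) :=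
    hgint.const_mul K
  have hFint : IntegrableOn F (Set.Ioo 0 u) := by
    refine Integrable.mono hKg hFmeas ?_
    filter_upwards [ae_restrict_mem measurableSet_Ioo] with s hs
    rw [Real.norm_eq_abs, Real.norm_eq_abs]
    exact (hbound s hs).trans (le_abs_self _)
  refine ⟨hFint, beta_integrable ha hb, ?_⟩
  -- the final estimate
  have hmain : |∫ s in Set.Ioo (0:ℝ) u, F s| ≤ K * (u ^ (a + b + 1) * B) := by
    have h5 : ‖∫ s in Set.Ioo (0:ℝ) u, F s‖ ≤
        ∫ s in Set.Ioo (0:ℝ) u, K * (s ^ a * (u - s) ^ b) := by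
      refine norm_integral_le_of_norm_le hKg ?_
      filter_upwards [ae_restrict_mem measurableSet_Ioo] with s hs
      rw [Real.norm_eq_abs]
      exact hbound s hs
    rw [Real.norm_eq_abs] at h5
    calc |∫ s in Set.Ioo (0:ℝ) u, F s|
        ≤ ∫ s in Set.Ioo (0:ℝ) u, K * (s ^ a * (u - s) ^ b) := h5
      _ = K * ∫ s in Set.Ioo (0:ℝ) u, s ^ a * (u - s) ^ b := MeasureTheory.integral_const_mul _ _
      _ = K * (u ^ (a + b + 1) * B) := by rw [hgeq]
  have huH : (0:ℝ) ≤ u ^ (H - 1/2) := Real.rpow_nonneg hu0.le _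
  calc u ^ (H - 1/2) * |∫ s in Set.Ioo (0:ℝ) u, F s|
      ≤ u ^ (H - 1/2) * (K * (u ^ (a + b + 1) * B)) :=
        mul_le_mul_of_nonneg_left hmain huH
    _ = K * B * (u ^ (H - 1/2) * u ^ (a + b + 1)) := by ring
    _ = K * B * u ^ (α₀ - H + 1/2) := by
        rw [← Real.rpow_add hu0]
        congr 2
        rw [hadef, hbdef]; ring
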